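/- Let k ≥ 1 be an integer and ℓ ∈ {1,…,k}. For x ∈ ℝ^k, let ⟨x⟩_{ℓ,↑;p} denote the p-mean (taken in ℝ^ℓ) of the vector whose coordinates are the ℓ smallest of the absolute values |x₁|,…,|x_k|, and let ⟨x⟩_{ℓ,↓;p} denote the p-mean of the vector whose coordinates are the ℓ largest of these absolute values. Then ⟨·⟩_{ℓ,↑;p} is Schur²-concave on ℝ^k for every p ∈ [−∞, 2], and ⟨·⟩_{ℓ,↓;p} is Schur²-convex on ℝ^k for every p ∈ [2, ∞]. -/

import Mathlib

open MeasureTheory ProbabilityTheory Filter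
open scoped ENNReal

noncomputable section

/-- The standard Gaussian measure on `ℝ^k` (the `k`-fold product of `N(0,1)`). -/
def stdGaussianPi (k : ℕ) : MeasureTheory.Measure (Fin k → ℝ) :=
  MeasureTheory.Measure.pi fun _ => ProbabilityTheory.gaussianReal 0 1

/-- `a` majorizes `b`: the total sums agree and, for every `j`, the sum of the `j`
largest entries of `a` is at least the sum of the `j` largest entries of `b`
(formulated equivalently: every sum of entries of `b` over an index set is dominated by
a sum of entries of `a` over an index set of the same cardinality). -/
def Majorizes {k : ℕ} (a b : Fin k → ℝ) : Prop :=
  (∑ i, a i = ∑ i, b i) ∧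
  ∀ s : Finset (Fin k), ∃ t : Finset (Fin k),
    t.card = s.card ∧ ∑ i ∈ s, b i ≤ ∑ i ∈ t, a i

/-- The coordinatewise square `x² = (x₁², …, x_k²)` of a vector. -/
def sqv {k : ℕ} (x : Fin k → ℝ) : Fin k → ℝ := fun i => (x i) ^ 2

/-- `f` is Schur²-concave: `f x ≤ f y` whenever `x²` majorizes `y²`. -/
def Schur2Concave {k : ℕ} {α : Type*} [Preorder α] (f : (Fin k → ℝ) → α) : Prop :=
  ∀ x y : Fin k → ℝ, Majorizes (sqv x) (sqv y) → f x ≤ f y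

/-- `f` is Schur²-convex: `f x ≥ f y` whenever `x²` majorizes `y²`. -/
def Schur2Convex {k : ℕ} {α : Type*} [Preorder α] (f : (Fin k → ℝ) → α) : Prop :=
  ∀ x y : Fin k → ℝ, Majorizes (sqv x) (sqv y) → f y ≤ f x

/-- A set `A` is Schur²-convex if `x ∈ A` and `y² ⪯ x²` imply `y ∈ A`. -/
def Schur2ConvexSet {k : ℕ} (A : Set (Fin k → ℝ)) : Prop :=
  ∀ x y : Fin k → ℝ, x ∈ A → Majorizes (sqv x) (sqv y) → y ∈ A

/-- A set `A` is Schur²-concave if `x ∈ A` and `y² ⪰ x²` imply `y ∈ A`. -/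
def Schur2ConcaveSet {k : ℕ} (A : Set (Fin k → ℝ)) : Prop :=
  ∀ x y : Fin k → ℝ, x ∈ A → Majorizes (sqv y) (sqv x) → y ∈ A

open Classical in
/-- The `p`-mean `⟨x⟩_p` for `p ∈ [-∞, ∞]` (coded as `p : EReal`):
`⟨x⟩_p = ((1/k) ∑ |x_j|^p)^(1/p)` for real `p ≠ 0`, with `⟨x⟩_p := 0` when `p < 0` and
some `x_j = 0`; `⟨x⟩_0 = ∏ |x_j|^(1/k)`; `⟨x⟩_∞ = max |x_j|`; `⟨x⟩_{-∞} = min |x_j|`. -/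
noncomputable def pMean {k : ℕ} (p : EReal) (x : Fin k → ℝ) : ℝ :=
  if p = ⊤ then ⨆ j, |x j|
  else if p = ⊥ then ⨅ j, |x j|
  else if p = 0 then ∏ j, |x j| ^ ((k : ℝ)⁻¹)
  else if p.toReal < 0 ∧ ∃ j, x j = 0 then 0
  else ((k : ℝ)⁻¹ * ∑ j, |x j| ^ p.toReal) ^ (p.toReal)⁻¹

/-- The absolute values `|x₁|, …, |x_k|` sorted in nondecreasing order. -/
noncomputable def absSorted {k : ℕ} (x : Fin k → ℝ) : Fin k → ℝ :=
  (fun i => |x i|) ∘ Tuple.sort (fun i => |x i|)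

/-- The vector in `ℝ^ℓ` of the `ℓ` smallest of the absolute values `|x₁|, …, |x_k|`. -/
noncomputable def smallestAbs {k : ℕ} (ℓ : ℕ) (hℓ : ℓ ≤ k) (x : Fin k → ℝ) :
    Fin ℓ → ℝ :=
  fun j => absSorted x (Fin.castLE hℓ j)

/-- The vector in `ℝ^ℓ` of the `ℓ` largest of the absolute values `|x₁|, …, |x_k|`. -/
noncomputable def largestAbs {k : ℕ} (ℓ : ℕ) (hℓ : ℓ ≤ k) (x : Fin k → ℝ) :
    Fin ℓ → ℝ :=
  fun j => absSorted x ⟨k - ℓ + j.1, by have := j.2; omega⟩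


/-! ### Auxiliary lemmas -/

section Helpers
open Finset Set

/-- Abel-summation nonnegativity. -/
lemma abel_nonneg' (n : ℕ) (c d : ℕ → ℝ)
    (hc0 : ∀ i < n, 0 ≤ c i)
    (hca : ∀ i j, i ≤ j → j < n → c j ≤ c i)
    (hd : ∀ j ≤ n, 0 ≤ ∑ i ∈ range j, d i) :
    0 ≤ ∑ i ∈ range n, c i * d i := by
  rcases Nat.eq_zero_or_pos n with rfl | hn
  · simp
  have key := Finset.sum_range_by_parts (M := ℝ) c d n
  simp only [smul_eq_mul] at key
  rw [key]
  have h1 : 0 ≤ c (n-1) * ∑ i ∈ range n, d i :=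
    mul_nonneg (hc0 _ (by omega)) (hd n le_rfl)
  have h2 : ∑ i ∈ range (n-1), (c (i+1) - c i) * ∑ j ∈ range (i+1), d j ≤ 0 := by
    apply Finset.sum_nonpos
    intro i hi
    simp only [Finset.mem_range] at hi
    exact mul_nonpos_of_nonpos_of_nonneg
      (sub_nonpos.2 (hca i (i+1) (by omega) (by omega))) (hd (i+1) (by omega))
  linarith

/-- A Tomić-type comparison via Abel summation. -/
lemma tomic (n : ℕ) (u v a b c : ℕ → ℝ)
    (hab : ∀ i < n, a i + c i * (v i - u i) ≤ b i)
    (hc0 : ∀ i < n, 0 ≤ c i)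
    (hca : ∀ i j, i ≤ j → j < n → c j ≤ c i)
    (hps : ∀ j ≤ n, ∑ i ∈ range j, u i ≤ ∑ i ∈ range j, v i) :
    ∑ i ∈ range n, a i ≤ ∑ i ∈ range n, b i := by
  have h1 : 0 ≤ ∑ i ∈ range n, c i * (v i - u i) := by
    apply abel_nonneg' n c (fun i => v i - u i) hc0 hca
    intro j hj
    rw [Finset.sum_sub_distrib]
    exact sub_nonneg.2 (hps j hj)
  have h2 : ∑ i ∈ range n, (a i + c i * (v i - u i)) ≤ ∑ i ∈ range n, b i :=
    Finset.sum_le_sum fun i hi => hab i (Finset.mem_range.1 hi)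
  rw [Finset.sum_add_distrib] at h2
  linarith

lemma rpow_tangent_ge_one {q s t : ℝ} (hq : 1 ≤ q) (hs : 0 < s) (ht : 0 ≤ t) :
    s ^ q + q * s ^ (q - 1) * (t - s) ≤ t ^ q := by
  have h1 : (-1 : ℝ) ≤ t / s - 1 := by
    have : 0 ≤ t / s := div_nonneg ht hs.le
    linarith
  have hb := one_add_mul_self_le_rpow_one_add h1 hq
  have h2 : (1 : ℝ) + (t / s - 1) = t / s := by ring
  rw [h2] at hb
  rw [Real.div_rpow ht hs.le] at hb
  have hsq : 0 < s ^ q := Real.rpow_pos_of_pos hs q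
  have h4 : s ^ q * (1 + q * (t / s - 1)) ≤ s ^ q * (t ^ q / s ^ q) :=
    mul_le_mul_of_nonneg_left hb hsq.le
  have h5 : s ^ q * (t ^ q / s ^ q) = t ^ q := by field_simp
  have h6 : s ^ (q - 1) = s ^ q / s := by
    rw [Real.rpow_sub hs, Real.rpow_one]
  rw [h5] at h4
  calc s ^ q + q * s ^ (q - 1) * (t - s) = s ^ q * (1 + q * (t / s - 1)) := by
        rw [h6]; field_simp
    _ ≤ t ^ q := h4

lemma rpow_tangent_le_one {q s t : ℝ} (hq0 : 0 < q) (hq : q ≤ 1) (hs : 0 < s) (ht : 0 ≤ t) :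
    t ^ q ≤ s ^ q + q * s ^ (q - 1) * (t - s) := by
  have h1 : (-1 : ℝ) ≤ t / s - 1 := by
    have : 0 ≤ t / s := div_nonneg ht hs.le
    linarith
  have hb := rpow_one_add_le_one_add_mul_self h1 hq0.le hq
  have h2 : (1 : ℝ) + (t / s - 1) = t / s := by ring
  rw [h2] at hb
  rw [Real.div_rpow ht hs.le] at hb
  have hsq : 0 < s ^ q := Real.rpow_pos_of_pos hs q
  have h4 : s ^ q * (t ^ q / s ^ q) ≤ s ^ q * (1 + q * (t / s - 1)) :=
    mul_le_mul_of_nonneg_left hb hsq.le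
  have h5 : s ^ q * (t ^ q / s ^ q) = t ^ q := by field_simp
  have h6 : s ^ (q - 1) = s ^ q / s := by
    rw [Real.rpow_sub hs, Real.rpow_one]
  rw [h5] at h4
  calc t ^ q ≤ s ^ q * (1 + q * (t / s - 1)) := h4
    _ = s ^ q + q * s ^ (q - 1) * (t - s) := by rw [h6]; field_simp

lemma rpow_tangent_nonpos {q s t : ℝ} (hq : q ≤ 0) (hs : 0 < s) (ht : 0 < t) :
    s ^ q + q * s ^ (q - 1) * (t - s) ≤ t ^ q := by
  rcases eq_or_lt_of_le hq with rfl | hq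
  · simp [Real.rpow_zero]
  set F : ℝ → ℝ := fun z => z ^ q - q * s ^ (q - 1) * z with hF
  have hderiv : ∀ z : ℝ, 0 < z →
      HasDerivAt F (q * z ^ (q - 1) - q * s ^ (q - 1)) z := by
    intro z hz
    have h1 := Real.hasDerivAt_rpow_const (x := z) (p := q) (Or.inl hz.ne')
    have h2 : HasDerivAt (fun z : ℝ => q * s ^ (q - 1) * z) (q * s ^ (q - 1)) z := by
      simpa using (hasDerivAt_id z).const_mul (q * s ^ (q - 1))
    exact h1.sub h2
  have key : F s ≤ F t := by
    rcases le_total s t with hst | hst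
    · have hmono : MonotoneOn F (Icc s t) := by
        apply monotoneOn_of_deriv_nonneg (convex_Icc s t)
        · exact fun z hz => (hderiv z (lt_of_lt_of_le hs hz.1)).continuousAt.continuousWithinAt
        · intro z hz
          rw [interior_Icc] at hz
          exact (hderiv z (hs.trans hz.1)).differentiableAt.differentiableWithinAt
        · intro z hz
          rw [interior_Icc] at hz
          have hz0 : 0 < z := hs.trans hz.1
          rw [(hderiv z hz0).deriv]
          have : z ^ (q - 1) ≤ s ^ (q - 1) :=
            Real.rpow_le_rpow_of_nonpos hs hz.1.le (by linarith)
          nlinarith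
      exact hmono ⟨le_rfl, hst⟩ ⟨hst, le_rfl⟩ hst
    · have hanti : AntitoneOn F (Icc t s) := by
        apply antitoneOn_of_deriv_nonpos (convex_Icc t s)
        · exact fun z hz => (hderiv z (lt_of_lt_of_le ht hz.1)).continuousAt.continuousWithinAt
        · intro z hz
          rw [interior_Icc] at hz
          exact (hderiv z (ht.trans hz.1)).differentiableAt.differentiableWithinAt
        · intro z hz
          rw [interior_Icc] at hz
          have hz0 : 0 < z := ht.trans hz.1
          rw [(hderiv z hz0).deriv]
          have : s ^ (q - 1) ≤ z ^ (q - 1) :=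
            Real.rpow_le_rpow_of_nonpos hz0 hz.2.le (by linarith)
          nlinarith
      exact hanti ⟨le_rfl, hst⟩ ⟨hst, le_rfl⟩ hst
  have h6 : s ^ (q - 1) * s = s ^ q := by
    rw [← Real.rpow_add_one hs.ne']; ring_nf
  simp only [hF] at key
  nlinarith [key]

lemma log_tangent {s t : ℝ} (hs : 0 < s) (ht : 0 < t) :
    Real.log t ≤ Real.log s + s⁻¹ * (t - s) := by
  have h := Real.log_le_sub_one_of_pos (div_pos ht hs)
  rw [Real.log_div ht.ne' hs.ne'] at h
  have h2 : t / s - 1 = s⁻¹ * (t - s) := by field_simp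
  rw [h2] at h
  linarith

lemma strictMono_fin_le {m k : ℕ} (g : Fin m → Fin k) (hg : StrictMono g) :
    ∀ n (hn : n < m), n ≤ (g ⟨n, hn⟩ : ℕ) := by
  intro n
  induction n with
  | zero => intro hn; exact Nat.zero_le _
  | succ i ih =>
    intro hn
    have hi : i < m := by omega
    have h1 := ih hi
    have h2 : g ⟨i, hi⟩ < g ⟨i + 1, hn⟩ := hg (by simp [Fin.lt_def])
    have h3 : (g ⟨i, hi⟩ : ℕ) < (g ⟨i + 1, hn⟩ : ℕ) := h2
    omega

lemma strictMono_fin_ub {m k : ℕ} (g : Fin m → Fin k) (hg : StrictMono g) (j : Fin m) :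
    (g j : ℕ) ≤ k - m + j := by
  have hm : 0 < m := j.pos
  have hk : 0 < k := (g j).pos
  set g' : Fin m → Fin k := fun i => (g i.rev).rev with hg'
  have hg's : StrictMono g' := by
    intro a b hab
    simp only [hg']
    rw [Fin.rev_lt_rev]
    exact hg (Fin.rev_lt_rev.2 hab)
  have h := strictMono_fin_le g' hg's (j.rev : ℕ) (by simpa using j.rev.isLt)
  have hval : (g' ⟨(j.rev : ℕ), j.rev.isLt⟩ : ℕ) = k - 1 - (g j : ℕ) := by
    simp only [hg']
    have : (⟨(j.rev : ℕ), j.rev.isLt⟩ : Fin m) = j.rev := by ext; rfl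
    rw [this, Fin.rev_rev]
    rw [Fin.val_rev]
    omega
  rw [hval] at h
  have h1 : (j.rev : ℕ) = m - 1 - (j : ℕ) := by rw [Fin.val_rev]; omega
  have h2 := (g j).isLt
  have h3 := j.isLt
  omega

/-- extension of `w : Fin k → ℝ` to `ℕ` by zero -/
noncomputable def extF {k : ℕ} (w : Fin k → ℝ) : ℕ → ℝ := fun i => if h : i < k then w ⟨i, h⟩ else 0

lemma sum_le_top {k m : ℕ} (w : Fin k → ℝ) (hw : Monotone w) (s : Finset (Fin k))
    (hm : s.card = m) (hmk : m ≤ k) :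
    ∑ i ∈ s, w i ≤ ∑ j ∈ range m, extF w (k - m + j) := by
  classical
  have e := s.orderIsoOfFin hm
  have hsum : ∑ i ∈ s, w i = ∑ j : Fin m, w (e j) := by
    rw [← Finset.sum_coe_sort s w]
    exact (Fintype.sum_equiv e.toEquiv _ _ fun j => rfl).symm
  rw [hsum]
  have hstrict : StrictMono (fun j : Fin m => (e j : Fin k)) := by
    intro a b hab
    exact_mod_cast (OrderIso.lt_iff_lt e).2 hab
  have hle : ∀ j : Fin m, w (e j) ≤ extF w (k - m + (j : ℕ)) := by
    intro j
    have hub := strictMono_fin_ub _ hstrict j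
    have hlt : k - m + (j : ℕ) < k := by have := j.isLt; omega
    rw [extF, dif_pos hlt]
    exact hw (by rw [Fin.le_def]; exact hub)
  calc ∑ j : Fin m, w (e j) ≤ ∑ j : Fin m, extF w (k - m + (j : ℕ)) :=
        Finset.sum_le_sum fun j _ => hle j
    _ = ∑ j ∈ range m, extF w (k - m + j) := Fin.sum_univ_eq_sum_range (fun j => extF w (k - m + j)) m

lemma total_split {k m : ℕ} (w : Fin k → ℝ) (hmk : m ≤ k) :
    ∑ j ∈ range k, extF w j = ∑ j ∈ range (k - m), extF w j + ∑ j ∈ range m, extF w (k - m + j) := by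
  have h : k = (k - m) + m := by omega
  rw [show range k = range ((k - m) + m) by rw [← h]]
  exact Finset.sum_range_add _ _ _

/-- the nondecreasing rearrangement of the squares of `x`, extended to `ℕ` by zero. -/
noncomputable def sqs {k : ℕ} (x : Fin k → ℝ) : ℕ → ℝ := extF (fun i => (absSorted x i) ^ 2)

lemma absSorted_nonneg {k : ℕ} (x : Fin k → ℝ) (i : Fin k) : 0 ≤ absSorted x i := abs_nonneg _

lemma absSorted_monotone {k : ℕ} (x : Fin k → ℝ) : Monotone (absSorted x) :=
  Tuple.monotone_sort _

lemma sqw_monotone {k : ℕ} (x : Fin k → ℝ) : Monotone (fun i => (absSorted x i) ^ 2) := by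
  intro a b hab
  exact pow_le_pow_left₀ (absSorted_nonneg x a) (absSorted_monotone x hab) 2

lemma sqw_eq {k : ℕ} (x : Fin k → ℝ) (i : Fin k) :
    (absSorted x i) ^ 2 = sqv x (Tuple.sort (fun i => |x i|) i) := by
  simp [absSorted, sqv, sq_abs, Function.comp]

lemma sqs_nonneg {k : ℕ} (x : Fin k → ℝ) (i : ℕ) : 0 ≤ sqs x i := by
  unfold sqs extF
  split
  · positivity
  · exact le_rfl

lemma sqs_fin {k : ℕ} (x : Fin k → ℝ) (j : Fin k) : sqs x j.1 = (absSorted x j) ^ 2 := by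
  simp [sqs, extF, j.isLt]

lemma sqs_mono {k : ℕ} (x : Fin k → ℝ) {i j : ℕ} (hij : i ≤ j) (hj : j < k) :
    sqs x i ≤ sqs x j := by
  have hi : i < k := by omega
  simp only [sqs, extF, dif_pos hi, dif_pos hj]
  exact sqw_monotone x (by rw [Fin.le_def]; exact hij)

lemma sqs_total {k : ℕ} (x : Fin k → ℝ) :
    ∑ j ∈ range k, sqs x j = ∑ i, sqv x i := by
  have h1 : ∑ j ∈ range k, sqs x j = ∑ i : Fin k, (absSorted x i) ^ 2 := by
    rw [← Fin.sum_univ_eq_sum_range (fun j => sqs x j) k]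
    exact Finset.sum_congr rfl fun i _ => by simp [sqs, extF, i.isLt]
  rw [h1]
  rw [Finset.sum_congr rfl fun i _ => sqw_eq x i]
  exact Equiv.sum_comp (Tuple.sort (fun i => |x i|)) (sqv x)

lemma sum_sqv_eq {k : ℕ} {t : Finset (Fin k)} (x : Fin k → ℝ) :
    ∑ i ∈ t, sqv x i = ∑ i ∈ t.image (Tuple.sort (fun i => |x i|)).symm,
      (fun i => (absSorted x i) ^ 2) i := by
  rw [Finset.sum_image (fun a _ b _ h => (Tuple.sort (fun i => |x i|)).symm.injective h)]
  exact Finset.sum_congr rfl fun i _ => by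
    rw [sqw_eq, Equiv.apply_symm_apply]

lemma top_sqs_eq {k : ℕ} (y : Fin k → ℝ) {m : ℕ} (hmk : m ≤ k) :
    ∑ j ∈ range m, sqs y (k - m + j) =
      ∑ i ∈ (Finset.univ.image
        (fun j : Fin m => Tuple.sort (fun i => |y i|) ⟨k - m + j.1, by omega⟩)), sqv y i := by
  rw [Finset.sum_image (by
    intro a _ b _ h
    have h1 := (Tuple.sort (fun i => |y i|)).injective h
    rw [Fin.mk.injEq] at h1
    exact Fin.ext (by omega))]
  rw [← Fin.sum_univ_eq_sum_range (fun j => sqs y (k - m + j)) m]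
  exact Finset.sum_congr rfl fun j _ => by
    have hlt : k - m + j.1 < k := by have := j.2; omega
    simp only [sqs, extF, dif_pos hlt]
    rw [sqw_eq]

lemma bot_sqs_eq {k : ℕ} (y : Fin k → ℝ) {m : ℕ} (hmk : m ≤ k) :
    ∑ j ∈ range m, sqs y j =
      ∑ i ∈ (Finset.univ.image
        (fun j : Fin m => Tuple.sort (fun i => |y i|) ⟨j.1, by omega⟩)), sqv y i := by
  rw [Finset.sum_image (by
    intro a _ b _ h
    have h1 := (Tuple.sort (fun i => |y i|)).injective h
    rw [Fin.mk.injEq] at h1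
    exact Fin.ext (by omega))]
  rw [← Fin.sum_univ_eq_sum_range (fun j => sqs y j) m]
  exact Finset.sum_congr rfl fun j _ => by
    have hlt : j.1 < k := by have := j.2; omega
    simp only [sqs, extF, dif_pos hlt]
    rw [sqw_eq]

lemma card_image_top {k : ℕ} (y : Fin k → ℝ) {m : ℕ} (hmk : m ≤ k) :
    (Finset.univ.image
        (fun j : Fin m => Tuple.sort (fun i => |y i|) ⟨k - m + j.1, by omega⟩)).card = m := by
  rw [Finset.card_image_of_injective _ (by
    intro a b h
    have h1 := (Tuple.sort (fun i => |y i|)).injective h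
    rw [Fin.mk.injEq] at h1
    exact Fin.ext (by omega))]
  simp

lemma card_image_bot {k : ℕ} (y : Fin k → ℝ) {m : ℕ} (hmk : m ≤ k) :
    (Finset.univ.image
        (fun j : Fin m => Tuple.sort (fun i => |y i|) ⟨j.1, by omega⟩)).card = m := by
  rw [Finset.card_image_of_injective _ (by
    intro a b h
    have h1 := (Tuple.sort (fun i => |y i|)).injective h
    rw [Fin.mk.injEq] at h1
    exact Fin.ext (by omega))]
  simp

lemma M2 {k : ℕ} {x y : Fin k → ℝ} (h : Majorizes (sqv x) (sqv y)) {m : ℕ} (hmk : m ≤ k) :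
    ∑ j ∈ range m, sqs y (k - m + j) ≤ ∑ j ∈ range m, sqs x (k - m + j) := by
  classical
  rw [top_sqs_eq y hmk]
  obtain ⟨t, htcard, hle⟩ := h.2 _
  rw [card_image_top y hmk] at htcard
  refine hle.trans ?_
  rw [sum_sqv_eq x]
  refine sum_le_top _ (sqw_monotone x) _ ?_ hmk
  rw [Finset.card_image_of_injective _ (Tuple.sort (fun i => |x i|)).symm.injective, htcard]

lemma M1 {k : ℕ} {x y : Fin k → ℝ} (h : Majorizes (sqv x) (sqv y)) {m : ℕ} (hmk : m ≤ k) :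
    ∑ j ∈ range m, sqs x j ≤ ∑ j ∈ range m, sqs y j := by
  classical
  set S := Finset.univ.image
      (fun j : Fin m => Tuple.sort (fun i => |y i|) ⟨j.1, by omega⟩) with hS
  have hScard : S.card = m := card_image_bot y hmk
  have hSc : Sᶜ.card = k - m := by
    rw [Finset.card_compl, hScard]; simp
  obtain ⟨t, htcard, hle⟩ := h.2 Sᶜ
  rw [hSc] at htcard
  have hy1 : ∑ i ∈ Sᶜ, sqv y i = ∑ i, sqv y i - ∑ j ∈ range m, sqs y j := by
    have := Finset.sum_compl_add_sum S (sqv y)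
    rw [bot_sqs_eq y hmk, ← hS]
    linarith
  have hx1 : ∑ i ∈ t, sqv x i ≤ ∑ i, sqv x i - ∑ j ∈ range m, sqs x j := by
    have h2 : ∑ i ∈ t, sqv x i ≤ ∑ j ∈ range (k - m), sqs x (k - (k - m) + j) := by
      rw [sum_sqv_eq x]
      refine sum_le_top _ (sqw_monotone x) _ ?_ (by omega)
      rw [Finset.card_image_of_injective _ (Tuple.sort (fun i => |x i|)).symm.injective, htcard]
    have h3 := total_split (fun i => (absSorted x i) ^ 2) (show k - m ≤ k by omega)
    have h4 : k - (k - m) = m := by omega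
    rw [h4] at h2 h3
    have h5 : ∑ j ∈ range k, sqs x j = ∑ i, sqv x i := sqs_total x
    unfold sqs
    unfold sqs at h2 h5
    linarith
  have htot := h.1
  have := hle.trans hx1
  rw [hy1] at this
  linarith

lemma pMean_nonneg {m : ℕ} (p : EReal) (z : Fin m → ℝ) : 0 ≤ pMean p z := by
  unfold pMean
  split_ifs with h1 h2 h3 h4
  · exact Real.iSup_nonneg fun j => abs_nonneg _
  · exact Real.iInf_nonneg fun j => abs_nonneg _
  · exact Finset.prod_nonneg fun j _ => Real.rpow_nonneg (abs_nonneg _) _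
  · exact le_rfl
  · refine Real.rpow_nonneg ?_ _
    refine mul_nonneg (by positivity) (Finset.sum_nonneg fun j _ => ?_)
    exact Real.rpow_nonneg (abs_nonneg _) _

end Helpers

section Main
open Finset

lemma pMean_bot {m : ℕ} (z : Fin m → ℝ) : pMean ⊥ z = ⨅ j, |z j| := by
  simp [pMean]

lemma pMean_top {m : ℕ} (z : Fin m → ℝ) : pMean ⊤ z = ⨆ j, |z j| := by
  simp [pMean]

lemma pMean_zero {m : ℕ} (z : Fin m → ℝ) : pMean 0 z = ∏ j, |z j| ^ ((m : ℝ)⁻¹) := by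
  simp [pMean]

lemma pMean_coe_pos {m : ℕ} {c : ℝ} (hc : 0 < c) (z : Fin m → ℝ) :
    pMean (c : EReal) z = ((m : ℝ)⁻¹ * ∑ j, |z j| ^ c) ^ c⁻¹ := by
  rw [pMean, if_neg (EReal.coe_ne_top c), if_neg (EReal.coe_ne_bot c),
    if_neg (by exact_mod_cast hc.ne'), if_neg (by simp [EReal.toReal_coe]; intro h; exact absurd h (not_lt.2 hc.le))]
  simp [EReal.toReal_coe]

lemma pMean_coe_neg_zero {m : ℕ} {c : ℝ} (hc : c < 0) {z : Fin m → ℝ} (hz : ∃ j, z j = 0) :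
    pMean (c : EReal) z = 0 := by
  rw [pMean, if_neg (EReal.coe_ne_top c), if_neg (EReal.coe_ne_bot c),
    if_neg (by exact_mod_cast hc.ne), if_pos (by exact ⟨by simpa [EReal.toReal_coe] using hc, hz⟩)]

lemma pMean_coe_neg {m : ℕ} {c : ℝ} (hc : c < 0) {z : Fin m → ℝ} (hz : ¬ ∃ j, z j = 0) :
    pMean (c : EReal) z = ((m : ℝ)⁻¹ * ∑ j, |z j| ^ c) ^ c⁻¹ := by
  rw [pMean, if_neg (EReal.coe_ne_top c), if_neg (EReal.coe_ne_bot c),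
    if_neg (by exact_mod_cast hc.ne), if_neg (by rintro ⟨-, h⟩; exact hz h)]
  simp [EReal.toReal_coe]

lemma abs_rpow_sq (t c : ℝ) (ht : 0 ≤ t) : |t| ^ c = (t ^ 2) ^ (c / 2) := by
  have h : ((2 : ℕ) : ℝ) * (c / 2) = c := by push_cast; ring
  rw [abs_of_nonneg ht, ← Real.rpow_natCast t 2, ← Real.rpow_mul ht, h]

lemma smallest_sq {k ℓ : ℕ} (hℓk : ℓ ≤ k) (x : Fin k → ℝ) (j : Fin ℓ) :
    (smallestAbs ℓ hℓk x j) ^ 2 = sqs x j.1 :=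
  (sqs_fin x (Fin.castLE hℓk j)).symm

lemma largest_sq {k ℓ : ℕ} (hℓk : ℓ ≤ k) (x : Fin k → ℝ) (j : Fin ℓ) :
    (largestAbs ℓ hℓk x j) ^ 2 = sqs x (k - ℓ + j.1) :=
  (sqs_fin x ⟨k - ℓ + j.1, by have := j.2; omega⟩).symm

lemma smallest_nonneg {k ℓ : ℕ} (hℓk : ℓ ≤ k) (x : Fin k → ℝ) (j : Fin ℓ) :
    0 ≤ smallestAbs ℓ hℓk x j := absSorted_nonneg x _

lemma largest_nonneg {k ℓ : ℕ} (hℓk : ℓ ≤ k) (x : Fin k → ℝ) (j : Fin ℓ) :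
    0 ≤ largestAbs ℓ hℓk x j := absSorted_nonneg x _

lemma smallest_rsum {k ℓ : ℕ} (hℓk : ℓ ≤ k) (x : Fin k → ℝ) (c : ℝ) :
    ∑ j : Fin ℓ, |smallestAbs ℓ hℓk x j| ^ c = ∑ j ∈ range ℓ, (sqs x j) ^ (c / 2) := by
  rw [← Fin.sum_univ_eq_sum_range (fun j => (sqs x j) ^ (c / 2)) ℓ]
  exact Finset.sum_congr rfl fun j _ => by
    rw [abs_rpow_sq _ _ (smallest_nonneg hℓk x j), smallest_sq hℓk x j]

lemma largest_rsum {k ℓ : ℕ} (hℓk : ℓ ≤ k) (x : Fin k → ℝ) (c : ℝ) :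
    ∑ j : Fin ℓ, |largestAbs ℓ hℓk x j| ^ c = ∑ j ∈ range ℓ, (sqs x (k - ℓ + j)) ^ (c / 2) := by
  rw [← Fin.sum_univ_eq_sum_range (fun j => (sqs x (k - ℓ + j)) ^ (c / 2)) ℓ]
  exact Finset.sum_congr rfl fun j _ => by
    rw [abs_rpow_sq _ _ (largest_nonneg hℓk x j), largest_sq hℓk x j]

lemma sqrt_sqs {k : ℕ} (x : Fin k → ℝ) (j : Fin k) :
    Real.sqrt (sqs x j.1) = absSorted x j := by
  rw [sqs_fin, Real.sqrt_sq (absSorted_nonneg x j)]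

lemma main_pos_case {k ℓ : ℕ} (hℓ1 : 1 ≤ ℓ) (hℓk : ℓ ≤ k) {x y : Fin k → ℝ}
    (hmaj : Majorizes (sqv x) (sqv y))
    (hbot : ∀ m, m ≤ ℓ → ∑ j ∈ Finset.range m, sqs x j ≤ ∑ j ∈ Finset.range m, sqs y j)
    {c : ℝ} (hcpos : 0 < c) (hc2 : c ≤ 2) :
    pMean (c : EReal) (smallestAbs ℓ hℓk x) ≤ pMean (c : EReal) (smallestAbs ℓ hℓk y) := by
  classical
  rw [pMean_coe_pos hcpos, pMean_coe_pos hcpos]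
  have hq0 : 0 < c / 2 := by positivity
  have hq1 : c / 2 ≤ 1 := by linarith
  have key : ∑ i ∈ Finset.range ℓ, (sqs x i) ^ (c/2) ≤ ∑ i ∈ Finset.range ℓ, (sqs y i) ^ (c/2) := by
    by_cases hN : ∃ i, i < ℓ ∧ sqs y i ≠ 0
    · set N := Nat.find hN with hNdef
      obtain ⟨hNℓ, hNne⟩ := Nat.find_spec hN
      have hvz : ∀ i < N, sqs y i = 0 := by
        intro i hi
        by_contra hne
        exact (Nat.find_min hN hi) ⟨by omega, hne⟩
      have hsumvN : ∑ i ∈ Finset.range N, sqs y i = 0 :=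
        Finset.sum_eq_zero fun i hi => hvz i (Finset.mem_range.1 hi)
      have huz : ∀ i < N, sqs x i = 0 := by
        intro i hi
        have h1 : ∑ i ∈ Finset.range N, sqs x i ≤ 0 := hsumvN ▸ hbot N (by omega)
        have h2 : ∑ i ∈ Finset.range N, sqs x i = 0 :=
          le_antisymm h1 (Finset.sum_nonneg fun i _ => sqs_nonneg x i)
        exact (Finset.sum_eq_zero_iff_of_nonneg fun i _ => sqs_nonneg x i).1 h2 i
          (Finset.mem_range.2 hi)
      have hvpos : ∀ i, N ≤ i → i < ℓ → 0 < sqs y i := fun i h1 h2 =>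
        lt_of_lt_of_le (lt_of_le_of_ne (sqs_nonneg y N) (Ne.symm hNne))
          (sqs_mono y h1 (lt_of_lt_of_le h2 hℓk))
      have hsplit : ∀ w : ℕ → ℝ,
          ∑ i ∈ Finset.range ℓ, w i
            = ∑ i ∈ Finset.range N, w i + ∑ i ∈ Finset.range (ℓ - N), w (N + i) := by
        intro w
        rw [show Finset.range ℓ = Finset.range (N + (ℓ - N)) by rw [Nat.add_sub_cancel' hNℓ.le]]
        exact Finset.sum_range_add _ _ _
      have ht := tomic (ℓ - N) (fun i => sqs x (N + i)) (fun i => sqs y (N + i))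
        (fun i => (sqs x (N + i)) ^ (c/2)) (fun i => (sqs y (N + i)) ^ (c/2))
        (fun i => (c/2) * (sqs y (N + i)) ^ (c/2 - 1))
        (by
          intro i hi
          try dsimp only
          have hs : 0 < sqs y (N + i) := hvpos (N + i) (by omega) (by omega)
          have htan := rpow_tangent_le_one hq0 hq1 hs (sqs_nonneg x (N + i))
          have hr : (c/2) * (sqs y (N+i)) ^ (c/2 - 1) * (sqs y (N+i) - sqs x (N+i))
              = -((c/2) * (sqs y (N+i)) ^ (c/2 - 1) * (sqs x (N+i) - sqs y (N+i))) := by ring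
          rw [hr]
          linarith)
        (fun i _ => mul_nonneg hq0.le (Real.rpow_nonneg (sqs_nonneg y _) _))
        (by
          intro i j hij hj
          try dsimp only
          have h1 : (sqs y (N + j)) ^ (c/2 - 1) ≤ (sqs y (N + i)) ^ (c/2 - 1) :=
            Real.rpow_le_rpow_of_nonpos (hvpos (N + i) (by omega) (by omega))
              (sqs_mono y (by omega) (by omega)) (by linarith)
          exact mul_le_mul_of_nonneg_left h1 hq0.le)
        (by
          intro j hj
          try dsimp only
          have h1 := hbot (N + j) (by omega)
          rw [Finset.sum_range_add, Finset.sum_range_add] at h1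
          have h2 : ∑ i ∈ Finset.range N, sqs x i = 0 :=
            Finset.sum_eq_zero fun i hi => huz i (Finset.mem_range.1 hi)
          rw [h2, hsumvN] at h1
          linarith)
      have e1 : ∑ i ∈ Finset.range ℓ, (sqs x i) ^ (c/2)
          = ∑ i ∈ Finset.range (ℓ - N), (sqs x (N + i)) ^ (c/2) := by
        rw [hsplit (fun i => (sqs x i) ^ (c/2))]
        have hz : ∑ i ∈ Finset.range N, (sqs x i) ^ (c/2) = 0 :=
          Finset.sum_eq_zero fun i hi => by
            rw [huz i (Finset.mem_range.1 hi), Real.zero_rpow hq0.ne']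
        rw [hz, zero_add]
      have e2 : ∑ i ∈ Finset.range ℓ, (sqs y i) ^ (c/2)
          = ∑ i ∈ Finset.range (ℓ - N), (sqs y (N + i)) ^ (c/2) := by
        rw [hsplit (fun i => (sqs y i) ^ (c/2))]
        have hz : ∑ i ∈ Finset.range N, (sqs y i) ^ (c/2) = 0 :=
          Finset.sum_eq_zero fun i hi => by
            rw [hvz i (Finset.mem_range.1 hi), Real.zero_rpow hq0.ne']
        rw [hz, zero_add]
      rw [e1, e2]
      exact ht
    · push_neg at hN
      have hsumv : ∑ i ∈ Finset.range ℓ, sqs y i = 0 :=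
        Finset.sum_eq_zero fun i hi => hN i (Finset.mem_range.1 hi)
      have huz : ∀ i ∈ Finset.range ℓ, sqs x i = 0 :=
        (Finset.sum_eq_zero_iff_of_nonneg fun i _ => sqs_nonneg x i).1
          (le_antisymm (hsumv ▸ hbot ℓ le_rfl) (Finset.sum_nonneg fun i _ => sqs_nonneg x i))
      have hz1 : ∑ i ∈ Finset.range ℓ, (sqs x i) ^ (c/2) = 0 :=
        Finset.sum_eq_zero fun i hi => by rw [huz i hi, Real.zero_rpow hq0.ne']
      have hz2 : ∑ i ∈ Finset.range ℓ, (sqs y i) ^ (c/2) = 0 :=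
        Finset.sum_eq_zero fun i hi => by
          rw [hN i (Finset.mem_range.1 hi), Real.zero_rpow hq0.ne']
      rw [hz1, hz2]
  rw [smallest_rsum hℓk x c, smallest_rsum hℓk y c]
  refine Real.rpow_le_rpow ?_ ?_ (by positivity)
  · exact mul_nonneg (by positivity)
      (Finset.sum_nonneg fun i _ => Real.rpow_nonneg (sqs_nonneg x i) _)
  · exact mul_le_mul_of_nonneg_left key (by positivity)

lemma pMean_smallest_le {k ℓ : ℕ} (hℓ1 : 1 ≤ ℓ) (hℓk : ℓ ≤ k) {x y : Fin k → ℝ}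
    (hmaj : Majorizes (sqv x) (sqv y)) {p : EReal} (hp : p ≤ 2) :
    pMean p (smallestAbs ℓ hℓk x) ≤ pMean p (smallestAbs ℓ hℓk y) := by
  classical
  haveI : Nonempty (Fin ℓ) := ⟨⟨0, hℓ1⟩⟩
  have hbot : ∀ m, m ≤ ℓ → ∑ j ∈ range m, sqs x j ≤ ∑ j ∈ range m, sqs y j :=
    fun m hm => M1 hmaj (le_trans hm hℓk)
  induction p using EReal.rec with
  | top =>
    exfalso
    have h2 : (2 : EReal) = ⊤ := top_le_iff.1 hp
    have h3 : ((2 : ℝ) : EReal) = (2 : EReal) := by norm_cast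
    exact EReal.coe_ne_top 2 (h3.trans h2)
  | bot =>
    rw [pMean_bot, pMean_bot]
    have hval : ∀ z : Fin k → ℝ,
        (⨅ j, |smallestAbs ℓ hℓk z j|) = smallestAbs ℓ hℓk z ⟨0, hℓ1⟩ := by
      intro z
      apply le_antisymm
      · refine (ciInf_le (Set.Finite.bddBelow (Set.finite_range _)) ⟨0, hℓ1⟩).trans ?_
        rw [abs_of_nonneg (smallest_nonneg hℓk z _)]
      · refine le_ciInf fun j => ?_
        rw [abs_of_nonneg (smallest_nonneg hℓk z _)]
        exact absSorted_monotone z (by rw [Fin.le_def]; exact Nat.zero_le _)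
    rw [hval x, hval y]
    have h1 : sqs x 0 ≤ sqs y 0 := by
      have := hbot 1 hℓ1
      simpa [Finset.sum_range_one] using this
    have hx : smallestAbs ℓ hℓk x ⟨0, hℓ1⟩ = Real.sqrt (sqs x 0) :=
      (sqrt_sqs x (Fin.castLE hℓk ⟨0, hℓ1⟩)).symm
    have hy : smallestAbs ℓ hℓk y ⟨0, hℓ1⟩ = Real.sqrt (sqs y 0) :=
      (sqrt_sqs y (Fin.castLE hℓk ⟨0, hℓ1⟩)).symm
    rw [hx, hy]
    exact Real.sqrt_le_sqrt h1
  | coe c =>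
    have hc2 : c ≤ 2 := by
      have h3 : ((2 : ℝ) : EReal) = (2 : EReal) := by norm_cast
      rw [← h3] at hp
      exact_mod_cast hp
    -- common facts about zeros
    by_cases hx0 : ∃ j, smallestAbs ℓ hℓk x j = 0
    case pos =>
      -- left side handled separately for c < 0 and c = 0 and c > 0
      rcases lt_trichotomy c 0 with hcneg | hc0 | hcpos
      · rw [pMean_coe_neg_zero hcneg hx0]
        exact pMean_nonneg _ _
      · subst hc0
        rw [show ((0:ℝ) : EReal) = 0 by norm_cast, pMean_zero, pMean_zero]
        obtain ⟨j, hj⟩ := hx0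
        have hzero : |smallestAbs ℓ hℓk x j| ^ ((ℓ:ℝ)⁻¹) = 0 := by
          rw [hj, abs_zero, Real.zero_rpow (by positivity)]
        calc ∏ j, |smallestAbs ℓ hℓk x j| ^ ((ℓ:ℝ)⁻¹) = 0 :=
              Finset.prod_eq_zero (Finset.mem_univ j) hzero
          _ ≤ _ := Finset.prod_nonneg fun i _ => Real.rpow_nonneg (abs_nonneg _) _
      · -- c > 0 with a zero on the left: still go through the generic argument below
        exact main_pos_case hℓ1 hℓk hmaj hbot hcpos hc2
    case neg =>
      have hy0 : ¬ ∃ j, smallestAbs ℓ hℓk y j = 0 := by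
        rintro ⟨j, hj⟩
        apply hx0
        refine ⟨⟨0, hℓ1⟩, ?_⟩
        have hvj : sqs y j.1 = 0 := by rw [← smallest_sq hℓk y j, hj]; simp
        have hv0 : sqs y 0 = 0 :=
          le_antisymm (hvj ▸ sqs_mono y (Nat.zero_le _) (lt_of_lt_of_le j.2 hℓk)) (sqs_nonneg y 0)
        have hu0 : sqs x 0 ≤ 0 := by
          have := hbot 1 hℓ1
          simpa [Finset.sum_range_one, hv0] using this
        have hsq : (smallestAbs ℓ hℓk x ⟨0, hℓ1⟩) ^ 2 = 0 :=
          le_antisymm (by rw [smallest_sq hℓk x]; exact hu0) (sq_nonneg _)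
        exact pow_eq_zero_iff (two_ne_zero) |>.1 hsq
      have hupos : ∀ i < ℓ, 0 < sqs x i := by
        intro i hi
        have hz := not_exists.1 hx0 ⟨i, hi⟩
        have : 0 < smallestAbs ℓ hℓk x ⟨i, hi⟩ :=
          lt_of_le_of_ne (smallest_nonneg hℓk x _) (Ne.symm hz)
        calc (0:ℝ) < (smallestAbs ℓ hℓk x ⟨i, hi⟩) ^ 2 := by positivity
          _ = sqs x i := smallest_sq hℓk x ⟨i, hi⟩
      have hvpos : ∀ i < ℓ, 0 < sqs y i := by
        intro i hi
        have hz := not_exists.1 hy0 ⟨i, hi⟩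
        have : 0 < smallestAbs ℓ hℓk y ⟨i, hi⟩ :=
          lt_of_le_of_ne (smallest_nonneg hℓk y _) (Ne.symm hz)
        calc (0:ℝ) < (smallestAbs ℓ hℓk y ⟨i, hi⟩) ^ 2 := by positivity
          _ = sqs y i := smallest_sq hℓk y ⟨i, hi⟩
      rcases lt_trichotomy c 0 with hcneg | hc0 | hcpos
      · -- negative exponent
        rw [pMean_coe_neg hcneg hx0, pMean_coe_neg hcneg hy0]
        set q : ℝ := c / 2 with hq
        have hqneg : q < 0 := by simp [hq]; linarith
        have key : ∑ i ∈ range ℓ, (sqs y i) ^ q ≤ ∑ i ∈ range ℓ, (sqs x i) ^ q := by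
          have ht := tomic ℓ (sqs x) (sqs y)
            (fun i => -((sqs x i) ^ q)) (fun i => -((sqs y i) ^ q))
            (fun i => -(q * (sqs y i) ^ (q - 1)))
            (by
              intro i hi
              try dsimp only
              have htan := rpow_tangent_nonpos hqneg.le (hvpos i hi) (hupos i hi)
              have hr : -(q * (sqs y i) ^ (q-1)) * (sqs y i - sqs x i)
                  = q * (sqs y i) ^ (q-1) * (sqs x i - sqs y i) := by ring
              rw [hr]
              linarith)
            (by
              intro i hi
              try dsimp only
              have h1 : 0 < (sqs y i) ^ (q - 1) := Real.rpow_pos_of_pos (hvpos i hi) _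
              nlinarith)
            (by
              intro i j hij hj
              try dsimp only
              have h1 : (sqs y j) ^ (q-1) ≤ (sqs y i) ^ (q-1) :=
                Real.rpow_le_rpow_of_nonpos (hvpos i (by omega))
                  (sqs_mono y hij (lt_of_lt_of_le hj hℓk)) (by linarith)
              have h2 : q * (sqs y i) ^ (q-1) ≤ q * (sqs y j) ^ (q-1) :=
                mul_le_mul_of_nonpos_left h1 hqneg.le
              linarith)
            hbot
          have e1 : ∑ i ∈ range ℓ, -((sqs x i) ^ q) = -∑ i ∈ range ℓ, (sqs x i) ^ q := by
            rw [Finset.sum_neg_distrib]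
          have e2 : ∑ i ∈ range ℓ, -((sqs y i) ^ q) = -∑ i ∈ range ℓ, (sqs y i) ^ q := by
            rw [Finset.sum_neg_distrib]
          rw [e1, e2] at ht
          linarith
        rw [smallest_rsum hℓk x c, smallest_rsum hℓk y c, ← hq]
        have hSy : 0 < ∑ i ∈ range ℓ, (sqs y i) ^ q := by
          refine Finset.sum_pos (fun i hi => Real.rpow_pos_of_pos (hvpos i (Finset.mem_range.1 hi)) _) ?_
          exact Finset.nonempty_range_iff.2 (by omega)
        have hl : (0:ℝ) < (ℓ:ℝ)⁻¹ := by positivity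
        refine Real.rpow_le_rpow_of_nonpos (by positivity) ?_ (by
          simp only [inv_nonpos]; exact hcneg.le)
        exact mul_le_mul_of_nonneg_left key hl.le
      · -- zero exponent
        subst hc0
        rw [show ((0:ℝ) : EReal) = 0 by norm_cast, pMean_zero, pMean_zero]
        have key : ∏ i ∈ range ℓ, sqs x i ≤ ∏ i ∈ range ℓ, sqs y i := by
          have ht := tomic ℓ (sqs x) (sqs y)
            (fun i => Real.log (sqs x i)) (fun i => Real.log (sqs y i))
            (fun i => (sqs y i)⁻¹)
            (by
              intro i hi
              try dsimp only
              have htan := log_tangent (hvpos i hi) (hupos i hi)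
              have hr : (sqs y i)⁻¹ * (sqs y i - sqs x i)
                = -((sqs y i)⁻¹ * (sqs x i - sqs y i)) := by ring
              rw [hr]
              linarith)
            (fun i hi => inv_nonneg.2 (sqs_nonneg y i))
            (by
              intro i j hij hj
              exact inv_anti₀ (hvpos i (by omega))
                (sqs_mono y hij (lt_of_lt_of_le hj hℓk)))
            hbot
          calc ∏ i ∈ range ℓ, sqs x i
              = Real.exp (∑ i ∈ range ℓ, Real.log (sqs x i)) := by
                rw [Real.exp_sum]
                exact (Finset.prod_congr rfl fun i hi =>
                  (Real.exp_log (hupos i (Finset.mem_range.1 hi))).symm)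
            _ ≤ Real.exp (∑ i ∈ range ℓ, Real.log (sqs y i)) := Real.exp_le_exp.2 ht
            _ = ∏ i ∈ range ℓ, sqs y i := by
                rw [Real.exp_sum]
                exact Finset.prod_congr rfl fun i hi =>
                  Real.exp_log (hvpos i (Finset.mem_range.1 hi))
        have hconv : ∀ z : Fin k → ℝ,
            ∏ j, |smallestAbs ℓ hℓk z j| ^ ((ℓ:ℝ)⁻¹)
              = (∏ i ∈ range ℓ, sqs z i) ^ ((ℓ:ℝ)⁻¹ / 2) := by
          intro z
          have h1 : ∀ j : Fin ℓ, |smallestAbs ℓ hℓk z j| ^ ((ℓ:ℝ)⁻¹)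
              = (sqs z j.1) ^ ((ℓ:ℝ)⁻¹ / 2) := fun j => by
            rw [abs_rpow_sq _ _ (smallest_nonneg hℓk z j), smallest_sq hℓk z j]
          rw [Finset.prod_congr rfl fun j _ => h1 j]
          rw [Fin.prod_univ_eq_prod_range (fun i => (sqs z i) ^ ((ℓ:ℝ)⁻¹ / 2)) ℓ]
          rw [Real.finset_prod_rpow _ _ (fun i _ => sqs_nonneg z i)]
        rw [hconv x, hconv y]
        exact Real.rpow_le_rpow (Finset.prod_nonneg fun i _ => sqs_nonneg x i) key (by positivity)
      · exact main_pos_case hℓ1 hℓk hmaj hbot hcpos hc2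

lemma pMean_largest_le {k ℓ : ℕ} (hℓ1 : 1 ≤ ℓ) (hℓk : ℓ ≤ k) {x y : Fin k → ℝ}
    (hmaj : Majorizes (sqv x) (sqv y)) {p : EReal} (hp : 2 ≤ p) :
    pMean p (largestAbs ℓ hℓk y) ≤ pMean p (largestAbs ℓ hℓk x) := by
  classical
  haveI : Nonempty (Fin ℓ) := ⟨⟨0, hℓ1⟩⟩
  have hk1 : 1 ≤ k := le_trans hℓ1 hℓk
  have htop : ∀ m, m ≤ ℓ →
      ∑ j ∈ Finset.range m, sqs y (k - m + j) ≤ ∑ j ∈ Finset.range m, sqs x (k - m + j) :=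
    fun m hm => M2 hmaj (le_trans hm hℓk)
  induction p using EReal.rec with
  | bot =>
    exfalso
    have h2 : (2 : EReal) = ⊥ := le_bot_iff.1 hp
    have h3 : ((2 : ℝ) : EReal) = (2 : EReal) := by norm_cast
    exact EReal.coe_ne_bot 2 (h3.trans h2)
  | top =>
    rw [pMean_top, pMean_top]
    have hval : ∀ z : Fin k → ℝ,
        (⨆ j, |largestAbs ℓ hℓk z j|) = Real.sqrt (sqs z (k - 1)) := by
      intro z
      apply le_antisymm
      · refine ciSup_le fun j => ?_
        rw [abs_of_nonneg (largest_nonneg hℓk z j)]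
        have h1 : Real.sqrt (sqs z (k - 1)) = absSorted z ⟨k - 1, by omega⟩ :=
          sqrt_sqs z ⟨k - 1, by omega⟩
        rw [h1]
        exact absSorted_monotone z
          (by simp only [Fin.le_def]; have := j.2; omega)
      · have hle := le_ciSup (Set.Finite.bddAbove (Set.finite_range
          (fun j => |largestAbs ℓ hℓk z j|))) (⟨ℓ - 1, by omega⟩ : Fin ℓ)
        refine le_trans ?_ hle
        rw [abs_of_nonneg (largest_nonneg hℓk z _)]
        show Real.sqrt (sqs z (k - 1)) ≤ absSorted z ⟨k - ℓ + (ℓ - 1), by omega⟩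
        have hidx : (⟨k - ℓ + (ℓ - 1), by omega⟩ : Fin k) = ⟨k - 1, by omega⟩ :=
          Fin.ext (by simp; omega)
        rw [hidx, ← sqrt_sqs z ⟨k - 1, by omega⟩]
    rw [hval x, hval y]
    apply Real.sqrt_le_sqrt
    have h1 := htop 1 hℓ1
    simpa [Finset.sum_range_one] using h1
  | coe c =>
    have hc2 : 2 ≤ c := by
      have h3 : ((2 : ℝ) : EReal) = (2 : EReal) := by norm_cast
      rw [← h3] at hp
      exact_mod_cast hp
    have hcpos : 0 < c := by linarith
    rw [pMean_coe_pos hcpos, pMean_coe_pos hcpos]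
    have hq1 : 1 ≤ c / 2 := by linarith
    have hq0 : 0 < c / 2 := by linarith
    have hps : ∀ j, j ≤ ℓ →
        ∑ i ∈ Finset.range j, sqs y (k - 1 - i) ≤ ∑ i ∈ Finset.range j, sqs x (k - 1 - i) := by
      intro j hj
      have hm := htop j hj
      have hrefl : ∀ z : Fin k → ℝ,
          ∑ i ∈ Finset.range j, sqs z (k - 1 - i) = ∑ i ∈ Finset.range j, sqs z (k - j + i) := by
        intro z
        rw [← Finset.sum_range_reflect (fun i => sqs z (k - j + i)) j]
        refine Finset.sum_congr rfl fun i hi => ?_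
        have hi' := Finset.mem_range.1 hi
        have hjk : j ≤ k := le_trans hj hℓk
        congr 1
        omega
      calc ∑ i ∈ Finset.range j, sqs y (k - 1 - i)
          = ∑ i ∈ Finset.range j, sqs y (k - j + i) := hrefl y
        _ ≤ ∑ i ∈ Finset.range j, sqs x (k - j + i) := hm
        _ = ∑ i ∈ Finset.range j, sqs x (k - 1 - i) := (hrefl x).symm
    have key0 := tomic ℓ (fun i => sqs y (k - 1 - i)) (fun i => sqs x (k - 1 - i))
      (fun i => (sqs y (k - 1 - i)) ^ (c/2)) (fun i => (sqs x (k - 1 - i)) ^ (c/2))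
      (fun i => (c/2) * (sqs y (k - 1 - i)) ^ (c/2 - 1))
      (by
        intro i hi
        try dsimp only
        by_cases h0 : sqs y (k - 1 - i) = 0
        · rw [h0]
          rcases eq_or_lt_of_le hq1 with hq1' | hq1'
          · rw [← hq1']
            simp [Real.rpow_one, Real.rpow_zero, Real.zero_rpow one_ne_zero]
          · rw [Real.zero_rpow hq0.ne', Real.zero_rpow (by intro h; rw [sub_eq_zero] at h; exact hq1'.ne h.symm)]
            simpa using Real.rpow_nonneg (sqs_nonneg x (k - 1 - i)) (c/2)
        · have hs : 0 < sqs y (k - 1 - i) :=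
            lt_of_le_of_ne (sqs_nonneg y _) (Ne.symm h0)
          exact rpow_tangent_ge_one hq1 hs (sqs_nonneg x (k - 1 - i)))
      (fun i _ => mul_nonneg hq0.le (Real.rpow_nonneg (sqs_nonneg y _) _))
      (by
        intro i j hij hj
        try dsimp only
        have h1 : sqs y (k - 1 - j) ≤ sqs y (k - 1 - i) :=
          sqs_mono y (by omega) (by omega)
        have h2 : (sqs y (k - 1 - j)) ^ (c/2 - 1) ≤ (sqs y (k - 1 - i)) ^ (c/2 - 1) :=
          Real.rpow_le_rpow (sqs_nonneg y _) h1 (by linarith)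
        exact mul_le_mul_of_nonneg_left h2 hq0.le)
      hps
    have hback : ∀ z : Fin k → ℝ,
        ∑ i ∈ Finset.range ℓ, (sqs z (k - ℓ + i)) ^ (c/2)
          = ∑ i ∈ Finset.range ℓ, (sqs z (k - 1 - i)) ^ (c/2) := by
      intro z
      rw [← Finset.sum_range_reflect (fun i => (sqs z (k - ℓ + i)) ^ (c/2)) ℓ]
      refine Finset.sum_congr rfl fun i hi => ?_
      have hi' := Finset.mem_range.1 hi
      have : k - ℓ + (ℓ - 1 - i) = k - 1 - i := by omega
      rw [this]
    rw [largest_rsum hℓk x c, largest_rsum hℓk y c, hback x, hback y]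
    refine Real.rpow_le_rpow ?_ ?_ (by positivity)
    · exact mul_nonneg (by positivity)
        (Finset.sum_nonneg fun i _ => Real.rpow_nonneg (sqs_nonneg y _) _)
    · exact mul_le_mul_of_nonneg_left key0 (by positivity)

end Main

/-- `⟨·⟩_{ℓ,↑;p}` (the `p`-mean of the `ℓ` smallest absolute values of the coordinates)
is Schur²-concave for every `p ∈ [-∞,2]`, and `⟨·⟩_{ℓ,↓;p}` (the `p`-mean of the `ℓ`
largest absolute values) is Schur²-convex for every `p ∈ [2,∞]`. -/
theorem pMean_smallest_largest_schur2 (k : ℕ) (hk : 1 ≤ k)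
    (ℓ : ℕ) (hℓ1 : 1 ≤ ℓ) (hℓk : ℓ ≤ k) :
    (∀ p : EReal, p ≤ 2 →
      Schur2Concave (fun x : Fin k → ℝ => pMean p (smallestAbs ℓ hℓk x))) ∧
    (∀ p : EReal, 2 ≤ p →
      Schur2Convex (fun x : Fin k → ℝ => pMean p (largestAbs ℓ hℓk x))) := by
  exact ⟨fun p hp => fun x y hmaj => pMean_smallest_le hℓ1 hℓk hmaj hp,
      fun p hp => fun x y hmaj => pMean_largest_le hℓ1 hℓk hmaj hp⟩
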